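/- Let ξ be a symmetrically distributed random variable with E ξ² = 1. For every ε > 0 and K > 0 there exists δ > 0 (depending on ε, K and the distribution of ξ) such that: whenever N ≥ n, A = (a_{ij}) is an N×n matrix of i.i.d. copies of ξ, and y ∈ S^{n-1} satisfies ‖y‖_∞ ≤ δ, the random set I_y = {i ≤ N : Σ_j a_{ij}² y_j² ≤ 2} satisfies P(|I_y| ≤ N − εN) ≤ exp(−KN). -/

import Mathlib

open MeasureTheory ProbabilityTheory Finset

lemma int_of_bdd {Ω' : Type*} [MeasureSpace Ω'] [IsProbabilityMeasure (ℙ : Measure Ω')]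
    {f : Ω' → ℝ} (C : ℝ) (hf : Measurable f) (hb : ∀ ω, |f ω| ≤ C) :
    Integrable f := by
  exact (integrable_const C).mono' hf.aestronglyMeasurable (ae_of_all _ (by simpa using hb))

set_option maxHeartbeats 2000000 in
lemma row_bound {Ω : Type*} [MeasureSpace Ω] [IsProbabilityMeasure (ℙ : Measure Ω)]
    {Ω' : Type*} [MeasureSpace Ω'] [IsProbabilityMeasure (ℙ : Measure Ω')]
    (ξ : Ω → ℝ) (hξmeas : Measurable ξ) (hξint : Integrable (fun ω => ξ ω ^ 2))
    (hξvar : ∫ ω, (ξ ω) ^ 2 = 1)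
    (M δ p : ℝ) (hM : 0 ≤ M) (hδ : 0 < δ)
    (htail : ∫ ω, ((ξ ω) ^ 2 - min ((ξ ω) ^ 2) M) ≤ p / 4)
    (hMδ : 4 * M * δ ^ 2 ≤ p / 2)
    {n : ℕ} (b : Fin n → Ω' → ℝ) (hbmeas : ∀ j, Measurable (b j))
    (hbindep : ∀ j k, j ≠ k → IndepFun (b j) (b k) ℙ)
    (hbid : ∀ j, IdentDistrib (b j) ξ ℙ ℙ)
    (y : Fin n → ℝ) (hy : ∑ j, (y j) ^ 2 = 1) (hyδ : ∀ j, |y j| ≤ δ) :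
    ℙ {ω | 2 < ∑ j, (b j ω) ^ 2 * (y j) ^ 2} ≤ ENNReal.ofReal p := by
  have hp : 0 ≤ p := by
    nlinarith [mul_nonneg (mul_nonneg (by norm_num : (0:ℝ) ≤ 4) hM) (sq_nonneg δ)]
  classical
  set φ : ℝ → ℝ := fun x => min (x ^ 2) M with hφdef
  have hφmeas : Measurable φ := (measurable_id.pow_const 2).min measurable_const
  have hφ0 : ∀ x, 0 ≤ φ x := fun x => le_min (sq_nonneg x) hM
  have hφM : ∀ x, φ x ≤ M := fun x => min_le_right _ _
  have hφsq : ∀ x, φ x ≤ x ^ 2 := fun x => min_le_left _ _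
  set ψ : ℝ → ℝ := fun x => x ^ 2 - φ x with hψdef
  have hψmeas : Measurable ψ := (measurable_id.pow_const 2).sub hφmeas
  have hψ0 : ∀ x, 0 ≤ ψ x := fun x => sub_nonneg.mpr (hφsq x)
  set c : ℝ := ∫ ω, φ (ξ ω) with hcdef
  have hφξint : Integrable (fun ω => φ (ξ ω)) :=
    hξint.mono' (hφmeas.comp hξmeas).aestronglyMeasurable
      (ae_of_all _ fun ω => by
        rw [Real.norm_eq_abs, abs_of_nonneg (hφ0 _)]; exact hφsq _)
  have hc0 : 0 ≤ c := integral_nonneg fun ω => hφ0 _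
  have hc1 : c ≤ 1 := by
    rw [hcdef, ← hξvar]; exact integral_mono hφξint hξint fun ω => hφsq _
  have hysq : ∀ j, (y j) ^ 2 ≤ δ ^ 2 := fun j => by
    have h := hyδ j
    nlinarith [abs_nonneg (y j), sq_abs (y j)]
  -- per-entry objects
  set W : Ω' → ℝ := fun ω => ∑ j, φ (b j ω) * (y j) ^ 2 with hWdef
  set V : Ω' → ℝ := fun ω => ∑ j, ψ (b j ω) * (y j) ^ 2 with hVdef
  set f : Fin n → Ω' → ℝ := fun j ω => (φ (b j ω) - c) * (y j) ^ 2 with hfdef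
  have hfmeas : ∀ j, Measurable (f j) := fun j =>
    ((hφmeas.comp (hbmeas j)).sub measurable_const).mul_const _
  have hfbdd : ∀ j ω, |f j ω| ≤ (M + 1) * δ ^ 2 := fun j ω => by
    have h1 := hφ0 (b j ω); have h2 := hφM (b j ω)
    have h3 := hysq j; have h4 := sq_nonneg (y j)
    rw [abs_mul, abs_of_nonneg h4]
    have : |φ (b j ω) - c| ≤ M + 1 := by
      rw [abs_le]; constructor <;> nlinarith
    nlinarith [abs_nonneg (φ (b j ω) - c)]
  have hfint : ∀ j, Integrable (f j) := fun j =>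
    int_of_bdd ((M + 1) * δ ^ 2) (hfmeas j) (hfbdd j)
  have hφbid : ∀ j, IdentDistrib (fun ω => φ (b j ω)) (fun ω => φ (ξ ω)) ℙ ℙ :=
    fun j => (hbid j).comp hφmeas
  have hφbint : ∀ j, Integrable (fun ω => φ (b j ω)) := fun j =>
    (hφbid j).integrable_iff.mpr hφξint
  have hEφb : ∀ j, ∫ ω, φ (b j ω) = c := fun j => (hφbid j).integral_eq
  have hEf : ∀ j, ∫ ω, f j ω = 0 := fun j => by
    have : ∫ ω, f j ω = (∫ ω, (φ (b j ω) - c)) * (y j) ^ 2 := integral_mul_const _ _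
    rw [this, integral_sub (hφbint j) (integrable_const c), hEφb j, integral_const]
    simp
  -- cross terms vanish
  have hcross : ∀ j k, j ≠ k → ∫ ω, f j ω * f k ω = 0 := by
    intro j k hjk
    have hind : IndepFun (f j) (f k) ℙ := by
      have := (hbindep j k hjk).comp
        (φ := fun x => (φ x - c) * (y j) ^ 2) (ψ := fun x => (φ x - c) * (y k) ^ 2)
        ((hφmeas.sub measurable_const).mul_const _) ((hφmeas.sub measurable_const).mul_const _)
      exact this
    have := hind.integral_mul_eq_mul_integral (hfint j).aestronglyMeasurable (hfint k).aestronglyMeasurable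
    calc ∫ ω, f j ω * f k ω = (∫ ω, f j ω) * ∫ ω, f k ω := this
      _ = 0 := by rw [hEf j, hEf k]; ring
  -- diagonal terms
  have hEφsq : ∫ ω, (φ (ξ ω)) ^ 2 ≤ M * c := by
    have hint1 : Integrable (fun ω => (φ (ξ ω)) ^ 2) :=
      int_of_bdd (M ^ 2) ((hφmeas.comp hξmeas).pow_const 2) (fun ω => by
        have h1 := hφ0 (ξ ω); have h2 := hφM (ξ ω)
        rw [abs_of_nonneg (sq_nonneg _)]; nlinarith)
    calc ∫ ω, (φ (ξ ω)) ^ 2 ≤ ∫ ω, M * φ (ξ ω) :=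
          integral_mono hint1 (hφξint.const_mul M) (fun ω => by
            have h1 := hφ0 (ξ ω); have h2 := hφM (ξ ω); nlinarith)
      _ = M * c := by rw [integral_const_mul, ← hcdef]
  have hvarφ : ∫ ω, (φ (ξ ω) - c) ^ 2 ≤ M := by
    have hintl : Integrable (fun ω => (φ (ξ ω) - c) ^ 2) :=
      int_of_bdd ((M + 1) ^ 2) (((hφmeas.comp hξmeas).sub measurable_const).pow_const 2)
        (fun ω => by
          have h1 := hφ0 (ξ ω); have h2 := hφM (ξ ω)
          rw [abs_of_nonneg (sq_nonneg _)]; nlinarith)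
    calc ∫ ω, (φ (ξ ω) - c) ^ 2 ≤ ∫ ω, ((M - 2 * c) * φ (ξ ω) + c ^ 2) := by
          refine integral_mono hintl ((hφξint.const_mul _).add (integrable_const _)) fun ω => ?_
          have h1 := hφ0 (ξ ω); have h2 := hφM (ξ ω); nlinarith
      _ = (M - 2 * c) * c + c ^ 2 := by
          rw [integral_add (hφξint.const_mul _) (integrable_const _), integral_const_mul,
            ← hcdef, integral_const]
          simp
      _ ≤ M := by nlinarith
  have hdiag : ∀ j, ∫ ω, (f j ω) ^ 2 ≤ M * ((y j) ^ 2 * (y j) ^ 2) := by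
    intro j
    have hid2 : IdentDistrib (fun ω => (φ (b j ω) - c) ^ 2) (fun ω => (φ (ξ ω) - c) ^ 2) ℙ ℙ :=
      (hbid j).comp (((hφmeas.sub measurable_const)).pow_const 2)
    have h1 : ∫ ω, (f j ω) ^ 2 = (∫ ω, (φ (b j ω) - c) ^ 2) * ((y j) ^ 2 * (y j) ^ 2) := by
      have : (fun ω => (f j ω) ^ 2)
          = fun ω => ((φ (b j ω) - c) ^ 2) * ((y j) ^ 2 * (y j) ^ 2) := by
        funext ω; simp only [hfdef]; ring
      rw [this, integral_mul_const]
    rw [h1, hid2.integral_eq]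
    have := mul_nonneg (sq_nonneg (y j)) (sq_nonneg (y j))
    nlinarith [hvarφ]
  -- product integrability
  have hfprodint : ∀ j k, Integrable (fun ω => f j ω * f k ω) := fun j k =>
    int_of_bdd (((M + 1) * δ ^ 2) ^ 2) ((hfmeas j).mul (hfmeas k)) (fun ω => by
      rw [abs_mul]
      have h1 := hfbdd j ω; have h2 := hfbdd k ω
      have h3 := abs_nonneg (f j ω); have h4 := abs_nonneg (f k ω)
      nlinarith)
  -- second moment of W - c
  have hWc : ∀ ω, W ω - c = ∑ j, f j ω := by
    intro ω
    have : ∑ j, f j ω = (∑ j, φ (b j ω) * (y j) ^ 2) - c * ∑ j, (y j) ^ 2 := by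
      rw [Finset.mul_sum, ← Finset.sum_sub_distrib]
      exact Finset.sum_congr rfl fun j _ => by simp only [hfdef]; ring
    rw [this, hy, mul_one, hWdef]
  have hvarW : ∫ ω, (W ω - c) ^ 2 ≤ M * δ ^ 2 := by
    have hexp : ∫ ω, (W ω - c) ^ 2 = ∑ j, ∑ k, ∫ ω, f j ω * f k ω := by
      have h1 : (fun ω => (W ω - c) ^ 2) = fun ω => ∑ j, ∑ k, f j ω * f k ω := by
        funext ω
        rw [hWc ω, sq, Finset.sum_mul_sum]
      rw [h1, integral_finset_sum _ (fun j _ => integrable_finset_sum _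
        (fun k _ => hfprodint j k))]
      exact Finset.sum_congr rfl fun j _ => integral_finset_sum _ fun k _ => hfprodint j k
    rw [hexp]
    have hrow : ∀ j : Fin n, ∑ k, ∫ ω, f j ω * f k ω ≤ M * ((y j) ^ 2 * (y j) ^ 2) := by
      intro j
      rw [Finset.sum_eq_single j (fun k _ hkj => hcross j k (Ne.symm hkj)) (by simp)]
      have : ∫ ω, f j ω * f j ω = ∫ ω, (f j ω) ^ 2 := by
        congr 1; funext ω; ring
      rw [this]; exact hdiag j
    calc ∑ j, ∑ k, ∫ ω, f j ω * f k ω ≤ ∑ j : Fin n, M * ((y j) ^ 2 * (y j) ^ 2) :=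
          Finset.sum_le_sum fun j _ => hrow j
      _ ≤ ∑ j : Fin n, M * (δ ^ 2 * (y j) ^ 2) := by
          refine Finset.sum_le_sum fun j _ => ?_
          exact mul_le_mul_of_nonneg_left
            (mul_le_mul_of_nonneg_right (hysq j) (sq_nonneg (y j))) hM
      _ = M * δ ^ 2 := by
          rw [← Finset.mul_sum, ← Finset.mul_sum, hy]; ring
  -- Markov for the bounded part
  have hWmeas : Measurable W := by
    rw [hWdef]
    exact Finset.measurable_sum _ fun j _ => (hφmeas.comp (hbmeas j)).mul_const _
  have hWcint : Integrable (fun ω => (W ω - c) ^ 2) := by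
    refine int_of_bdd ((M + 1) ^ 2) ((hWmeas.sub measurable_const).pow_const 2) (fun ω => ?_)
    have hW0 : 0 ≤ W ω := by
      rw [hWdef]
      exact Finset.sum_nonneg fun j _ => mul_nonneg (hφ0 _) (sq_nonneg _)
    have hWM : W ω ≤ M := by
      rw [hWdef]
      calc ∑ j, φ (b j ω) * (y j) ^ 2 ≤ ∑ j, M * (y j) ^ 2 :=
            Finset.sum_le_sum fun j _ => mul_le_mul_of_nonneg_right (hφM _) (sq_nonneg _)
        _ = M := by rw [← Finset.mul_sum, hy, mul_one]
    rw [abs_of_nonneg (sq_nonneg _)]; nlinarith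
  have hmarA : 1 / 4 * (ℙ {ω | (1:ℝ) / 4 ≤ (W ω - c) ^ 2}).toReal ≤ ∫ ω, (W ω - c) ^ 2 :=
    mul_meas_ge_le_integral_of_nonneg (μ := ℙ) (f := fun ω => (W ω - c) ^ 2)
      (ae_of_all _ fun ω => sq_nonneg (W ω - c)) hWcint (1 / 4)
  have hA : ℙ {ω | (1:ℝ) / 4 ≤ (W ω - c) ^ 2} ≤ ENNReal.ofReal (p / 2) := by
    rw [ENNReal.le_ofReal_iff_toReal_le (measure_ne_top _ _) (by linarith)]
    nlinarith [le_trans hmarA hvarW]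
  -- Markov for the tail part
  have hψξint : Integrable (fun ω => ψ (ξ ω)) := by
    have heq : (fun ω => ψ (ξ ω)) = fun ω => ξ ω ^ 2 - φ (ξ ω) := rfl
    rw [heq]; exact hξint.sub hφξint
  have hψbint : ∀ j, Integrable (fun ω => ψ (b j ω)) := fun j =>
    ((hbid j).comp hψmeas).integrable_iff.mpr hψξint
  have hVint : Integrable V := by
    rw [hVdef]
    exact integrable_finset_sum _ fun j _ => (hψbint j).mul_const _
  have hV0 : ∀ ω, 0 ≤ V ω := fun ω => by
    rw [hVdef]
    exact Finset.sum_nonneg fun j _ => mul_nonneg (hψ0 _) (sq_nonneg _)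
  have hEV : ∫ ω, V ω ≤ p / 4 := by
    have h1 : ∫ ω, V ω = ∑ j, (∫ ω, ψ (b j ω)) * (y j) ^ 2 := by
      rw [hVdef, integral_finset_sum _ fun j _ => (hψbint j).mul_const _]
      exact Finset.sum_congr rfl fun j _ => integral_mul_const _ _
    have h2 : ∀ j : Fin n, ∫ ω, ψ (b j ω) = ∫ ω, ψ (ξ ω) := fun j =>
      ((hbid j).comp hψmeas).integral_eq
    rw [h1]
    calc ∑ j, (∫ ω, ψ (b j ω)) * (y j) ^ 2 = (∫ ω, ψ (ξ ω)) * ∑ j, (y j) ^ 2 := by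
          rw [Finset.mul_sum]
          exact Finset.sum_congr rfl fun j _ => by rw [h2 j]
      _ ≤ p / 4 := by rw [hy, mul_one]; exact htail
  have hmarB : 1 / 2 * (ℙ {ω | (1:ℝ) / 2 ≤ V ω}).toReal ≤ ∫ ω, V ω :=
    mul_meas_ge_le_integral_of_nonneg (μ := ℙ) (f := V)
      (ae_of_all _ hV0) hVint (1 / 2)
  have hB : ℙ {ω | (1:ℝ) / 2 ≤ V ω} ≤ ENNReal.ofReal (p / 2) := by
    rw [ENNReal.le_ofReal_iff_toReal_le (measure_ne_top _ _) (by linarith)]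
    nlinarith [le_trans hmarB hEV]
  -- combine
  have hsub : {ω | 2 < ∑ j, (b j ω) ^ 2 * (y j) ^ 2}
      ⊆ {ω | (1:ℝ) / 4 ≤ (W ω - c) ^ 2} ∪ {ω | (1:ℝ) / 2 ≤ V ω} := by
    intro ω hω
    simp only [Set.mem_setOf_eq, Set.mem_union] at hω ⊢
    have hWV : W ω + V ω = ∑ j, (b j ω) ^ 2 * (y j) ^ 2 := by
      rw [hWdef, hVdef]
      simp only
      rw [← Finset.sum_add_distrib]
      exact Finset.sum_congr rfl fun j _ => by rw [hψdef]; ring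
    by_cases hBc : (1:ℝ) / 2 ≤ V ω
    · exact Or.inr hBc
    · refine Or.inl ?_
      push_neg at hBc
      have h1 : (1:ℝ) / 2 ≤ W ω - c := by nlinarith
      nlinarith
  calc ℙ {ω | 2 < ∑ j, (b j ω) ^ 2 * (y j) ^ 2}
      ≤ ℙ ({ω | (1:ℝ) / 4 ≤ (W ω - c) ^ 2} ∪ {ω | (1:ℝ) / 2 ≤ V ω}) := measure_mono hsub
    _ ≤ ℙ {ω | (1:ℝ) / 4 ≤ (W ω - c) ^ 2} + ℙ {ω | (1:ℝ) / 2 ≤ V ω} := measure_union_le _ _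
    _ ≤ ENNReal.ofReal (p / 2) + ENNReal.ofReal (p / 2) := add_le_add hA hB
    _ = ENNReal.ofReal p := by
        rw [← ENNReal.ofReal_add (by linarith) (by linarith)]; norm_num


set_option maxHeartbeats 1000000 in
lemma prod_rows {N n : ℕ} {Ω' : Type*} [MeasureSpace Ω'] [IsProbabilityMeasure (ℙ : Measure Ω')]
    (a : Fin N × Fin n → Ω' → ℝ) (hameas : ∀ p, Measurable (a p))
    (haindep : iIndepFun a ℙ)
    (y : Fin n → ℝ) (s : Finset (Fin N)) :
    ℙ (⋂ i ∈ s, {ω | 2 < ∑ j, (a (i, j) ω) ^ 2 * (y j) ^ 2}) =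
      ∏ i ∈ s, ℙ {ω | 2 < ∑ j, (a (i, j) ω) ^ 2 * (y j) ^ 2} := by
  classical
  induction s using Finset.induction_on with
  | empty => simp
  | @insert k s hk ih =>
    rw [Finset.prod_insert hk, ← ih, Finset.set_biInter_insert]
    set E : Fin N → Set Ω' := fun i => {ω | 2 < ∑ j, (a (i, j) ω) ^ 2 * (y j) ^ 2} with hEdef
    set S : Finset (Fin N × Fin n) := ({k} : Finset (Fin N)) ×ˢ (univ : Finset (Fin n)) with hSdef
    set T : Finset (Fin N × Fin n) := s ×ˢ (univ : Finset (Fin n)) with hTdef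
    have hST : Disjoint S T := by
      rw [Finset.disjoint_left]
      rintro ⟨i, j⟩ hS hT
      rw [hSdef, Finset.mem_product, Finset.mem_singleton] at hS
      rw [hTdef, Finset.mem_product] at hT
      exact hk (hS.1 ▸ hT.1)
    have hind := haindep.indepFun_finset S T hST hameas
    have hmemS : ∀ j : Fin n, ((k, j) : Fin N × Fin n) ∈ S := fun j => by
      rw [hSdef, Finset.mem_product]; exact ⟨Finset.mem_singleton_self k, Finset.mem_univ j⟩
    have hmemT : ∀ i ∈ s, ∀ j : Fin n, ((i, j) : Fin N × Fin n) ∈ T := fun i hi j => by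
      rw [hTdef, Finset.mem_product]; exact ⟨hi, Finset.mem_univ j⟩
    set Bk : Set (↥S → ℝ) := {v | 2 < ∑ j, (v ⟨(k, j), hmemS j⟩) ^ 2 * (y j) ^ 2} with hBkdef
    set Bs : Set (↥T → ℝ) :=
      ⋂ i, ⋂ (hi : i ∈ s), {v | 2 < ∑ j, (v ⟨(i, j), hmemT i hi j⟩) ^ 2 * (y j) ^ 2} with hBsdef
    have hBkm : MeasurableSet Bk := by
      refine measurableSet_lt measurable_const ?_
      exact Finset.measurable_sum _ fun j _ =>
        ((measurable_pi_apply _).pow_const 2).mul_const _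
    have hBsm : MeasurableSet Bs := by
      refine MeasurableSet.iInter fun i => MeasurableSet.iInter fun hi => ?_
      refine measurableSet_lt measurable_const ?_
      exact Finset.measurable_sum _ fun j _ =>
        ((measurable_pi_apply _).pow_const 2).mul_const _
    have hkey := hind.measure_inter_preimage_eq_mul Bk Bs hBkm hBsm
    have h1 : (fun ω (p : ↥S) => a p ω) ⁻¹' Bk = E k := rfl
    have h2 : (fun ω (p : ↥T) => a p ω) ⁻¹' Bs = ⋂ i ∈ s, E i := by
      ext ω
      simp only [Set.mem_preimage, hBsdef, Set.mem_iInter, Set.mem_setOf_eq, hEdef]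
    rw [h1, h2] at hkey
    exact hkey

set_option maxHeartbeats 1000000 in
/-- (Lemma 3.3.) Let `ξ` be a symmetrically distributed random variable
with unit second moment. For every `ε > 0` and `K > 0` there is `δ > 0` (depending on
`ε`, `K` and the distribution of `ξ`) such that: whenever `N ≥ n`, `A = (a_{ij})` is an
`N×n` matrix of i.i.d. copies of `ξ`, and `y ∈ S^{n-1}` satisfies `‖y‖_∞ ≤ δ`, the set
`I_y = {i : ∑_j a_{ij}² y_j² ≤ 2}` satisfies `P(|I_y| ≤ N − εN) ≤ exp(−KN)`. -/
theorem card_Iy_bound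
    {Ω : Type*} [MeasureSpace Ω] [IsProbabilityMeasure (ℙ : Measure Ω)]
    (ξ : Ω → ℝ)
    (hξmeas : Measurable ξ)
    (hξsymm : IdentDistrib ξ (fun ω => -ξ ω) ℙ ℙ)
    (hξvar : ∫ ω, (ξ ω) ^ 2 = 1)
    (ε K : ℝ) (hε : 0 < ε) (hK : 0 < K) :
    ∃ δ : ℝ, 0 < δ ∧
      ∀ (N n : ℕ), n ≤ N →
        ∀ (Ω' : Type) [MeasureSpace Ω'] [IsProbabilityMeasure (ℙ : Measure Ω')]
          (a : Fin N × Fin n → Ω' → ℝ),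
          (∀ p, Measurable (a p)) →
          iIndepFun a ℙ →
          (∀ p, IdentDistrib (a p) ξ ℙ ℙ) →
          ∀ (y : Fin n → ℝ), (∑ j, (y j) ^ 2 = 1) → (∀ j, |y j| ≤ δ) →
            ℙ {ω | ((Finset.univ.filter
                  (fun i : Fin N => ∑ j, (a (i, j) ω) ^ 2 * (y j) ^ 2 ≤ 2)).card : ℝ) ≤
                (N : ℝ) - ε * N} ≤
              ENNReal.ofReal (Real.exp (-(K * N))) := by
  
  classical
  have hξint : Integrable (fun ω => ξ ω ^ 2) := by
    by_contra h
    rw [integral_undef h] at hξvar; norm_num at hξvar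
  set p₀ : ℝ := Real.exp (-(K + 1) / ε) with hp₀def
  have hp₀pos : 0 < p₀ := Real.exp_pos _
  -- choose truncation level M
  obtain ⟨M, hMtail⟩ : ∃ M : ℕ, ∫ ω, (ξ ω ^ 2 - min (ξ ω ^ 2) (M : ℝ)) ≤ p₀ / 4 := by
    have hmeas : ∀ k : ℕ,
        AEStronglyMeasurable (fun ω => ξ ω ^ 2 - min (ξ ω ^ 2) (k : ℝ)) ℙ := fun k =>
      ((hξmeas.pow_const 2).sub
        ((hξmeas.pow_const 2).min measurable_const)).aestronglyMeasurable
    have hbound : ∀ k : ℕ, ∀ᵐ ω ∂(ℙ : Measure Ω),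
        ‖ξ ω ^ 2 - min (ξ ω ^ 2) (k : ℝ)‖ ≤ ξ ω ^ 2 := fun k =>
      ae_of_all _ fun ω => by
        have h0 : (0:ℝ) ≤ min (ξ ω ^ 2) k := le_min (sq_nonneg _) (Nat.cast_nonneg k)
        rw [Real.norm_eq_abs, abs_of_nonneg (sub_nonneg.mpr (min_le_left _ _))]
        linarith
    have hlim : ∀ᵐ ω ∂(ℙ : Measure Ω),
        Filter.Tendsto (fun k : ℕ => ξ ω ^ 2 - min (ξ ω ^ 2) (k : ℝ))
          Filter.atTop (nhds ((fun _ : Ω => (0:ℝ)) ω)) := by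
      refine ae_of_all _ fun ω => ?_
      have hev : ∀ᶠ k : ℕ in Filter.atTop, ξ ω ^ 2 - min (ξ ω ^ 2) (k : ℝ) = 0 := by
        filter_upwards [Filter.eventually_ge_atTop ⌈ξ ω ^ 2⌉₊] with k hk
        have hle : ξ ω ^ 2 ≤ (k : ℝ) := le_trans (Nat.le_ceil _) (by exact_mod_cast hk)
        rw [min_eq_left hle]; ring
      exact Filter.Tendsto.congr' (hev.mono fun k hk => hk.symm) tendsto_const_nhds
    have htend := tendsto_integral_of_dominated_convergence _ hmeas hξint hbound hlim
    rw [integral_zero] at htend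
    exact (htend.eventually_lt_const (by positivity : (0:ℝ) < p₀ / 4)).exists.imp
      fun k hk => hk.le
  set δ : ℝ := Real.sqrt (p₀ / (8 * ((M : ℝ) + 1))) with hδdef
  have hδpos : 0 < δ := Real.sqrt_pos.mpr (by positivity)
  have hδsq : δ ^ 2 = p₀ / (8 * ((M : ℝ) + 1)) := Real.sq_sqrt (by positivity)
  have h4M : 4 * (M : ℝ) * δ ^ 2 ≤ p₀ / 2 := by
    have hq : δ ^ 2 * (8 * ((M : ℝ) + 1)) = p₀ := by
      rw [hδsq]; field_simp
    nlinarith [sq_nonneg δ, (Nat.cast_nonneg M : (0:ℝ) ≤ (M:ℝ))]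
  refine ⟨δ, hδpos, ?_⟩
  intro N n hnN Ω' _ _ a hameas haindep haid y hy hyδ
  set m : ℕ := ⌈ε * N⌉₊ with hmdef
  have E : Fin N → Set Ω' := fun i => {ω | 2 < ∑ j, (a (i, j) ω) ^ 2 * (y j) ^ 2}
  have hrow : ∀ i : Fin N,
      ℙ {ω | 2 < ∑ j, (a (i, j) ω) ^ 2 * (y j) ^ 2} ≤ ENNReal.ofReal p₀ := fun i =>
    row_bound (Ω := Ω) (Ω' := Ω') (n := n) ξ hξmeas hξint hξvar (M : ℝ) δ p₀ (Nat.cast_nonneg M) hδpos hMtail h4M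
      (fun j => a (i, j)) (fun j => hameas (i, j))
      (fun j k hjk => haindep.indepFun
        (show ((i, j) : Fin N × Fin n) ≠ (i, k) by simp [Prod.ext_iff, hjk]))
      (fun j => haid (i, j)) y hy hyδ
  -- union bound inclusion
  have hsub : {ω | ((Finset.univ.filter
        (fun i : Fin N => ∑ j, (a (i, j) ω) ^ 2 * (y j) ^ 2 ≤ 2)).card : ℝ) ≤
        (N : ℝ) - ε * N}
      ⊆ ⋃ S ∈ Finset.powersetCard m (univ : Finset (Fin N)), ⋂ i ∈ S, {ω | 2 < ∑ j, (a (i, j) ω) ^ 2 * (y j) ^ 2} := by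
    intro ω hω
    simp only [Set.mem_setOf_eq] at hω
    have hcards : (Finset.univ.filter
          (fun i : Fin N => ∑ j, (a (i, j) ω) ^ 2 * (y j) ^ 2 ≤ 2)).card
        + (Finset.univ.filter
          (fun i : Fin N => ¬ (∑ j, (a (i, j) ω) ^ 2 * (y j) ^ 2 ≤ 2))).card = N := by
      rw [Finset.card_filter_add_card_filter_not, Finset.card_univ, Fintype.card_fin]
    have hc : ((Finset.univ.filter
          (fun i : Fin N => ∑ j, (a (i, j) ω) ^ 2 * (y j) ^ 2 ≤ 2)).card : ℝ)
        + ((Finset.univ.filter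
          (fun i : Fin N => ¬ (∑ j, (a (i, j) ω) ^ 2 * (y j) ^ 2 ≤ 2))).card : ℝ) = N := by
      exact_mod_cast hcards
    have hεle : ε * N ≤ ((Finset.univ.filter
        (fun i : Fin N => ¬ (∑ j, (a (i, j) ω) ^ 2 * (y j) ^ 2 ≤ 2))).card : ℝ) := by
      linarith
    have hm' : m ≤ (Finset.univ.filter
        (fun i : Fin N => ¬ (∑ j, (a (i, j) ω) ^ 2 * (y j) ^ 2 ≤ 2))).card :=
      Nat.ceil_le.mpr hεle
    obtain ⟨S, hSsub, hScard⟩ := Finset.exists_subset_card_eq hm'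
    refine Set.mem_biUnion (Finset.mem_powersetCard.mpr ⟨Finset.subset_univ S, hScard⟩) ?_
    refine Set.mem_biInter fun i hi => ?_
    have hmem := hSsub hi
    simp only [Finset.mem_filter] at hmem
    exact not_le.mp hmem.2
  -- combinatorial bound
  have hfin : ((N.choose m : ℝ)) * p₀ ^ m ≤ Real.exp (-(K * N)) := by
    have h1 : ((N.choose m : ℕ) : ℝ) ≤ 2 ^ N := by
      have : N.choose m ≤ 2 ^ N := by
        by_cases hmN : m ≤ N
        · calc N.choose m ≤ ∑ i ∈ Finset.range (N + 1), N.choose i :=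
                Finset.single_le_sum (f := fun i => N.choose i)
                  (fun i _ => Nat.zero_le _) (Finset.mem_range.mpr (Nat.lt_succ_of_le hmN))
            _ = 2 ^ N := Nat.sum_range_choose N
        · rw [Nat.choose_eq_zero_of_lt (lt_of_not_ge hmN)]; exact Nat.zero_le _
      exact_mod_cast this
    have h2 : p₀ ^ m = Real.exp ((m : ℝ) * (-(K + 1) / ε)) := by
      rw [Real.exp_nat_mul]
    have hmge : ε * N ≤ (m : ℝ) := Nat.le_ceil _
    set r : ℝ := (K + 1) / ε with hrdef
    have hr : 0 ≤ r := by positivity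
    have hεr : ε * r = K + 1 := by rw [hrdef]; field_simp
    have h3 : (m : ℝ) * (-(K + 1) / ε) ≤ -(K + 1) * N := by
      have hmm : ε * (N : ℝ) * r ≤ (m : ℝ) * r := mul_le_mul_of_nonneg_right hmge hr
      have h4 : ε * r * (N : ℝ) = (K + 1) * N := by rw [hεr]
      have h5 : (m : ℝ) * (-(K + 1) / ε) = -((m : ℝ) * r) := by rw [hrdef]; ring
      rw [h5]; nlinarith
    have h2e : (2 : ℝ) ≤ Real.exp 1 := by nlinarith [Real.add_one_le_exp 1]
    have h5 : (2 : ℝ) ^ N ≤ Real.exp N := by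
      calc (2 : ℝ) ^ N ≤ (Real.exp 1) ^ N := pow_le_pow_left₀ (by norm_num) h2e N
        _ = Real.exp N := by rw [← Real.exp_nat_mul, mul_one]
    calc ((N.choose m : ℕ) : ℝ) * p₀ ^ m ≤ 2 ^ N * Real.exp (-(K + 1) * N) := by
          refine mul_le_mul h1 ?_ (by positivity) (by positivity)
          rw [h2]; exact Real.exp_le_exp.mpr h3
      _ ≤ Real.exp N * Real.exp (-(K + 1) * N) :=
          mul_le_mul_of_nonneg_right h5 (Real.exp_nonneg _)
      _ = Real.exp ((N : ℝ) + -(K + 1) * N) := (Real.exp_add _ _).symm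
      _ ≤ Real.exp (-(K * N)) := Real.exp_le_exp.mpr (by nlinarith [(Nat.cast_nonneg N : (0:ℝ) ≤ (N:ℝ))])
  -- put everything together
  calc ℙ {ω | ((Finset.univ.filter
        (fun i : Fin N => ∑ j, (a (i, j) ω) ^ 2 * (y j) ^ 2 ≤ 2)).card : ℝ) ≤
        (N : ℝ) - ε * N}
      ≤ ℙ (⋃ S ∈ Finset.powersetCard m (univ : Finset (Fin N)), ⋂ i ∈ S, {ω | 2 < ∑ j, (a (i, j) ω) ^ 2 * (y j) ^ 2}) :=
        measure_mono hsub
    _ ≤ ∑ S ∈ Finset.powersetCard m (univ : Finset (Fin N)), ℙ (⋂ i ∈ S, {ω | 2 < ∑ j, (a (i, j) ω) ^ 2 * (y j) ^ 2}) :=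
        measure_biUnion_finset_le _ _
    _ ≤ ∑ _S ∈ Finset.powersetCard m (univ : Finset (Fin N)), ENNReal.ofReal p₀ ^ m := by
        refine Finset.sum_le_sum fun S hS => ?_
        rw [prod_rows a hameas haindep y S]
        have hcard := (Finset.mem_powersetCard.mp hS).2
        calc ∏ i ∈ S, ℙ {ω | 2 < ∑ j, (a (i, j) ω) ^ 2 * (y j) ^ 2}
            ≤ ∏ _i ∈ S, ENNReal.ofReal p₀ := Finset.prod_le_prod' fun i _ => hrow i
          _ = ENNReal.ofReal p₀ ^ m := by rw [Finset.prod_const, hcard]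
    _ = (N.choose m : ℕ) * ENNReal.ofReal p₀ ^ m := by
        rw [Finset.sum_const, Finset.card_powersetCard, Finset.card_univ, Fintype.card_fin,
          nsmul_eq_mul]
    _ ≤ ENNReal.ofReal (Real.exp (-(K * N))) := by
        rw [← ENNReal.ofReal_pow hp₀pos.le, ← ENNReal.ofReal_natCast (N.choose m),
          ← ENNReal.ofReal_mul (by positivity)]
        exact ENNReal.ofReal_le_ofReal hfin
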